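/- Let X^{(i)} ⊆ ℝ^8 be the set of the 8 vectors having seven coordinates equal to 1/2 and one coordinate equal to −1/2. Then J̃(8,3) ∪ X^{(i)} is a three-distance set of 64 points in H(8,3); moreover, for every y ∈ H(8,3), if J̃(8,3) ∪ {y} is a three-distance set then y ∈ J̃(8,3) ∪ X^{(i)}. Consequently, J̃(8,3) ∪ X^{(i)} is the unique maximal three-distance set in H(8,3) containing J̃(8,3). -/

import Mathlib

noncomputable section

/-- The set of distances between distinct points of `S`. -/
def distSet {n : ℕ} (S : Set (EuclideanSpace ℝ (Fin n))) : Set ℝ :=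
  {d | ∃ x ∈ S, ∃ y ∈ S, x ≠ y ∧ d = dist x y}

/-- `S` is an `s`-distance set: exactly `s` distances occur between distinct points. -/
def IsSDistanceSet {n : ℕ} (s : ℕ) (S : Set (EuclideanSpace ℝ (Fin n))) : Prop :=
  (distSet S).Finite ∧ (distSet S).ncard = s

/-- The representation `J̃(n,m)` of the Johnson graph `J(n,m)`: vectors with exactly `m`
coordinates equal to `1` and the rest equal to `0`. -/
def JohnsonRep (n m : ℕ) : Set (EuclideanSpace ℝ (Fin n)) :=
  {x | (∀ i, x i = 0 ∨ x i = 1) ∧ {i : Fin n | x i = 1}.ncard = m}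

/-- The hyperplane `H(n,m) = {x : ∑ x_i = m}`. -/
def Hyp (n m : ℕ) : Set (EuclideanSpace ℝ (Fin n)) :=
  {x | ∑ i, x i = (m : ℝ)}

/-- The set `X⁽ⁱ⁾ = ((1/2)^7, -1/2)^P ⊆ ℝ⁸`: seven coordinates `1/2`, one coordinate `-1/2`. -/
def X83 : Set (EuclideanSpace ℝ (Fin 8)) :=
  {y | {i : Fin 8 | y i = 1/2}.ncard = 7 ∧ {i : Fin 8 | y i = -1/2}.ncard = 1}

open Finset

def ind (A : Finset (Fin 8)) : EuclideanSpace ℝ (Fin 8) := WithLp.toLp 2 (fun i => if i ∈ A then 1 else 0)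

def xvec (i : Fin 8) : EuclideanSpace ℝ (Fin 8) := WithLp.toLp 2 (fun j => if j = i then -1/2 else 1/2)

lemma ncard_set_eq_filter (p : Fin 8 → Prop) [DecidablePred p] :
    {i : Fin 8 | p i}.ncard = (univ.filter p).card := by
  rw [show {i : Fin 8 | p i} = ↑(univ.filter p) by ext i; simp]
  exact Set.ncard_coe_finset _

lemma mem_J_iff {x : EuclideanSpace ℝ (Fin 8)} :
    x ∈ JohnsonRep 8 3 ↔ ∃ A : Finset (Fin 8), A.card = 3 ∧ x = ind A := by
  classical
  constructor
  · rintro ⟨h01, hc⟩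
    refine ⟨univ.filter (fun i => x i = 1), ?_, ?_⟩
    · rw [ncard_set_eq_filter] at hc; exact hc
    · ext i
      rcases h01 i with h | h <;> simp [ind, h]
  · rintro ⟨A, hA, rfl⟩
    constructor
    · intro i; by_cases h : i ∈ A <;> simp [ind, h]
    · rw [ncard_set_eq_filter]
      rw [show univ.filter (fun i => ind A i = 1) = A by ext i; by_cases h : i ∈ A <;> simp [ind, h]]
      exact hA

lemma mem_X_iff {x : EuclideanSpace ℝ (Fin 8)} :
    x ∈ X83 ↔ ∃ i : Fin 8, x = xvec i := by
  classical
  constructor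
  · rintro ⟨h7, h1⟩
    rw [ncard_set_eq_filter] at h7 h1
    obtain ⟨i, hi⟩ := Finset.card_eq_one.mp h1
    have hix : x i = -1/2 := by
      have : i ∈ univ.filter (fun j => x j = -1/2) := by rw [hi]; simp
      simpa using this
    refine ⟨i, PiLp.ext fun j => ?_⟩
    by_cases hj : j = i
    · subst hj; simp [xvec, hix]
    · -- j ≠ i : show x j = 1/2
      have hcard : (univ.filter (fun j => x j = 1/2)).card = 7 := h7
      by_contra hne
      have hxj : x j ≠ 1/2 := by
        intro h; apply hne; simp [xvec, hj, h]
      have hxj' : x j ≠ -1/2 := by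
        intro h
        have : j ∈ univ.filter (fun k => x k = -1/2) := by simp [h]
        rw [hi] at this; simp at this; exact hj this
      -- the two filters are disjoint, card 7 + 1 = 8 = univ, so j in one of them
      have hsub : univ.filter (fun k => x k = 1/2) ∪ univ.filter (fun k => x k = -1/2) ⊆ univ \ {j} := by
        intro k hk
        simp only [mem_union, mem_filter] at hk
        simp only [mem_sdiff, mem_univ, Finset.mem_singleton, true_and]
        rintro rfl
        rcases hk with ⟨_, h⟩ | ⟨_, h⟩
        · exact hxj h
        · exact hxj' h
      have hdisj : Disjoint (univ.filter (fun k => x k = 1/2)) (univ.filter (fun k => x k = -1/2)) := by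
        rw [Finset.disjoint_filter]
        intro k _ h h'
        rw [h] at h'; norm_num at h'
      have h8 : ((univ.filter (fun k => x k = 1/2)) ∪ (univ.filter (fun k => x k = -1/2))).card = 8 := by
        rw [Finset.card_union_of_disjoint hdisj, hcard, h1]
      have hle := Finset.card_le_card hsub
      rw [h8] at hle
      have : (univ \ {j} : Finset (Fin 8)).card = 7 := by
        rw [Finset.card_sdiff_of_subset (by simp)]; simp
      omega
  · rintro ⟨i, rfl⟩
    constructor
    · rw [ncard_set_eq_filter]
      rw [show univ.filter (fun j => xvec i j = 1/2) = univ \ {i} by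
        ext j; by_cases h : j = i <;> simp [xvec, h] <;> norm_num]
      rw [Finset.card_sdiff_of_subset (by simp)]; simp
    · rw [ncard_set_eq_filter]
      rw [show univ.filter (fun j => xvec i j = -1/2) = {i} by
        ext j; by_cases h : j = i <;> simp [xvec, h] <;> norm_num]
      simp

lemma dist_sq (z x : EuclideanSpace ℝ (Fin 8)) :
    dist z x ^ 2 = ∑ i, (z i - x i) ^ 2 := by
  rw [EuclideanSpace.dist_eq, Real.sq_sqrt (by positivity)]
  congr 1; funext i; rw [Real.dist_eq, sq_abs]

lemma dist_sq_ind (z : EuclideanSpace ℝ (Fin 8)) {A : Finset (Fin 8)} (hA : A.card = 3) :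
    dist z (ind A) ^ 2 = (∑ i, z i ^ 2) - 2 * (∑ i ∈ A, z i) + 3 := by
  rw [dist_sq]
  have h1 : ∀ i, (z i - ind A i) ^ 2 = z i ^ 2 - 2 * (if i ∈ A then z i else 0)
      + (if i ∈ A then 1 else 0) := by
    intro i; by_cases h : i ∈ A <;> simp [ind, h] <;> ring
  simp_rw [h1]
  rw [Finset.sum_add_distrib, Finset.sum_sub_distrib, ← Finset.mul_sum]
  rw [Finset.sum_ite_mem, Finset.sum_ite_mem, Finset.univ_inter, Finset.sum_const, hA]
  norm_num

lemma sum_ind (A : Finset (Fin 8)) : ∑ i, ind A i = (A.card : ℝ) := by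
  simp only [ind]
  rw [Finset.sum_ite_mem, Finset.univ_inter, Finset.sum_const]
  simp

lemma sum_ind_over (A B : Finset (Fin 8)) : ∑ i ∈ A, ind B i = ((A ∩ B).card : ℝ) := by
  simp only [ind]
  rw [Finset.sum_ite_mem, Finset.sum_const]
  simp

lemma sum_ind_sq (A : Finset (Fin 8)) : ∑ i, ind A i ^ 2 = (A.card : ℝ) := by
  have : ∀ i, ind A i ^ 2 = ind A i := by
    intro i; by_cases h : i ∈ A <;> simp [ind, h]
  simp_rw [this]; exact sum_ind A

lemma sum_xvec (i : Fin 8) : ∑ j, xvec i j = 3 := by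
  have : ∀ j, xvec i j = 1/2 - ind {i} j := by
    intro j; by_cases h : j = i <;> simp [xvec, ind, h] <;> norm_num
  simp_rw [this, Finset.sum_sub_distrib, sum_ind]
  simp; norm_num

lemma sum_xvec_sq (i : Fin 8) : ∑ j, xvec i j ^ 2 = 2 := by
  have : ∀ j, xvec i j ^ 2 = 1/4 := by
    intro j; by_cases h : j = i <;> simp [xvec, h] <;> norm_num
  simp_rw [this]
  simp; norm_num

lemma sum_xvec_over (A : Finset (Fin 8)) (i : Fin 8) :
    ∑ j ∈ A, xvec i j = (A.card : ℝ)/2 - (if i ∈ A then 1 else 0) := by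
  have : ∀ j, xvec i j = 1/2 - ind {i} j := by
    intro j; by_cases h : j = i <;> simp [xvec, ind, h] <;> norm_num
  simp_rw [this, Finset.sum_sub_distrib, sum_ind_over, Finset.sum_const]
  have : (A ∩ {i}).card = if i ∈ A then 1 else 0 := by
    by_cases h : i ∈ A
    · rw [Finset.inter_singleton_of_mem h]; simp [h]
    · rw [Finset.inter_singleton_of_notMem h]; simp [h]
  rw [this]
  by_cases h : i ∈ A <;> simp [h] <;> ring

lemma dist_eq_sqrt_sq {x y : EuclideanSpace ℝ (Fin 8)} {c : ℝ} (h : dist x y ^ 2 = c) :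
    dist x y = Real.sqrt c := by
  rw [← h, Real.sqrt_sq dist_nonneg]

lemma card_inter_lt {A B : Finset (Fin 8)} (hA : A.card = 3) (hB : B.card = 3)
    (hne : A ≠ B) : (A ∩ B).card < 3 := by
  rcases lt_or_ge (A ∩ B).card 3 with h | h
  · exact h
  · exfalso
    have h1 : A ∩ B ⊆ A := Finset.inter_subset_left
    have h2 : A ∩ B ⊆ B := Finset.inter_subset_right
    have e1 : A ∩ B = A := Finset.eq_of_subset_of_card_le h1 (by omega)
    have e2 : A ∩ B = B := Finset.eq_of_subset_of_card_le h2 (by omega)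
    exact hne (e1 ▸ e2)

lemma dist_ind_ind {A B : Finset (Fin 8)} (hA : A.card = 3) (hB : B.card = 3) :
    dist (ind A) (ind B) ^ 2 = 6 - 2 * ((A ∩ B).card : ℝ) := by
  rw [dist_sq_ind (ind A) hB, sum_ind_sq, sum_ind_over, hA, Finset.inter_comm]
  push_cast; ring

lemma dist_xvec_ind {i : Fin 8} {A : Finset (Fin 8)} (hA : A.card = 3) :
    dist (xvec i) (ind A) ^ 2 = if i ∈ A then 4 else 2 := by
  rw [dist_sq_ind (xvec i) hA, sum_xvec_sq, sum_xvec_over, hA]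
  by_cases h : i ∈ A <;> simp [h] <;> norm_num

lemma dist_xvec_xvec {i j : Fin 8} (h : i ≠ j) :
    dist (xvec i) (xvec j) ^ 2 = 2 := by
  rw [dist_sq]
  have key : ∀ k, (xvec i k - xvec j k) ^ 2 = if k ∈ ({i, j} : Finset (Fin 8)) then 1 else 0 := by
    intro k
    simp only [xvec, Finset.mem_insert, Finset.mem_singleton]
    split_ifs <;> simp_all <;> norm_num
  simp_rw [key]
  rw [Finset.sum_ite_mem, Finset.univ_inter, Finset.sum_const,
    Finset.card_insert_of_notMem (by simp [h]), Finset.card_singleton]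
  norm_num

def Dset : Set ℝ := {Real.sqrt 2, 2, Real.sqrt 6}

lemma sqrt2_lt_two : Real.sqrt 2 < 2 := by
  nlinarith [Real.sq_sqrt (show (0:ℝ) ≤ 2 by norm_num), Real.sqrt_nonneg 2]

lemma two_lt_sqrt6 : (2:ℝ) < Real.sqrt 6 := by
  nlinarith [Real.sq_sqrt (show (0:ℝ) ≤ 6 by norm_num), Real.sqrt_nonneg 6]

lemma Dset_finite : Dset.Finite := by
  unfold Dset
  exact (Set.finite_singleton _).insert _ |>.insert _

lemma Dset_ncard : Dset.ncard = 3 := by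
  have h1 := sqrt2_lt_two
  have h2 := two_lt_sqrt6
  have hne1 : Real.sqrt 2 ≠ 2 := ne_of_lt h1
  have hne2 : Real.sqrt 2 ≠ Real.sqrt 6 := by intro h; rw [h] at h1; linarith
  have hne3 : (2:ℝ) ≠ Real.sqrt 6 := ne_of_lt h2
  rw [Dset]
  rw [Set.ncard_insert_of_notMem (by simp [hne1, hne2]) ((Set.finite_singleton _).insert _),
      Set.ncard_insert_of_notMem (by simp [hne3]) (Set.finite_singleton _),
      Set.ncard_singleton]

lemma ind_ne_ind {A B : Finset (Fin 8)} (h : A ≠ B) : ind A ≠ ind B := by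
  intro hee
  apply h
  ext i
  have := congrArg (fun v => v i) hee
  by_cases hA : i ∈ A <;> by_cases hB : i ∈ B <;>
    simp [ind, hA, hB] at this ⊢ <;> norm_num at this

lemma distSet_mono {S T : Set (EuclideanSpace ℝ (Fin 8))} (h : S ⊆ T) :
    distSet S ⊆ distSet T := by
  rintro d ⟨x, hx, y, hy, hne, rfl⟩
  exact ⟨x, h hx, y, h hy, hne, rfl⟩

lemma mem_Dset_of_sq {x y : EuclideanSpace ℝ (Fin 8)}
    (h : dist x y ^ 2 = 2 ∨ dist x y ^ 2 = 4 ∨ dist x y ^ 2 = 6) : dist x y ∈ Dset := by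
  rcases h with h | h | h
  · left; exact dist_eq_sqrt_sq h
  · right; left
    rw [dist_eq_sqrt_sq h, show (4:ℝ) = 2^2 by norm_num, Real.sqrt_sq (by norm_num)]
  · right; right; exact dist_eq_sqrt_sq h

lemma ind_mem_J {A : Finset (Fin 8)} (hA : A.card = 3) : ind A ∈ JohnsonRep 8 3 :=
  mem_J_iff.mpr ⟨A, hA, rfl⟩

lemma Dset_subset_distSet {S : Set (EuclideanSpace ℝ (Fin 8))} (h : JohnsonRep 8 3 ⊆ S) :
    Dset ⊆ distSet S := by
  have c1 : ({0,1,2} : Finset (Fin 8)).card = 3 := by decide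
  have c2 : ({0,1,3} : Finset (Fin 8)).card = 3 := by decide
  have c3 : ({0,3,4} : Finset (Fin 8)).card = 3 := by decide
  have c4 : ({3,4,5} : Finset (Fin 8)).card = 3 := by decide
  intro d hd
  rcases hd with h1 | h1 | h1
  · refine ⟨ind {0,1,2}, h (ind_mem_J c1), ind {0,1,3}, h (ind_mem_J c2),
      ind_ne_ind (by decide), ?_⟩
    rw [h1]
    symm
    apply dist_eq_sqrt_sq
    rw [dist_ind_ind c1 c2, show ({0,1,2} : Finset (Fin 8)) ∩ {0,1,3} = {0,1} by decide]
    norm_num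
  · refine ⟨ind {0,1,2}, h (ind_mem_J c1), ind {0,3,4}, h (ind_mem_J c3),
      ind_ne_ind (by decide), ?_⟩
    rw [h1]
    have : dist (ind ({0,1,2} : Finset (Fin 8))) (ind ({0,3,4} : Finset (Fin 8))) ^ 2 = 4 := by
      rw [dist_ind_ind c1 c3, show ({0,1,2} : Finset (Fin 8)) ∩ {0,3,4} = {0} by decide]
      norm_num
    nlinarith [dist_nonneg (x := ind ({0,1,2} : Finset (Fin 8))) (y := ind ({0,3,4} : Finset (Fin 8)))]
  · refine ⟨ind {0,1,2}, h (ind_mem_J c1), ind {3,4,5}, h (ind_mem_J c4),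
      ind_ne_ind (by decide), ?_⟩
    rw [h1]
    symm
    apply dist_eq_sqrt_sq
    rw [dist_ind_ind c1 c4, show ({0,1,2} : Finset (Fin 8)) ∩ {3,4,5} = ∅ by decide]
    norm_num

lemma xvec_mem_X (i : Fin 8) : xvec i ∈ X83 := mem_X_iff.mpr ⟨i, rfl⟩

lemma distSet_JX_subset : distSet (JohnsonRep 8 3 ∪ X83) ⊆ Dset := by
  rintro d ⟨x, hx, y, hy, hne, rfl⟩
  rcases hx with hx | hx <;> rcases hy with hy | hy
  · obtain ⟨A, hA, rfl⟩ := mem_J_iff.mp hx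
    obtain ⟨B, hB, rfl⟩ := mem_J_iff.mp hy
    have hAB : A ≠ B := fun h => hne (by rw [h])
    have ht := card_inter_lt hA hB hAB
    apply mem_Dset_of_sq
    rw [dist_ind_ind hA hB]
    interval_cases h : (A ∩ B).card <;> norm_num
  · obtain ⟨A, hA, rfl⟩ := mem_J_iff.mp hx
    obtain ⟨i, rfl⟩ := mem_X_iff.mp hy
    apply mem_Dset_of_sq
    rw [dist_comm, dist_xvec_ind hA]
    by_cases h : i ∈ A <;> simp [h]
  · obtain ⟨i, rfl⟩ := mem_X_iff.mp hx
    obtain ⟨A, hA, rfl⟩ := mem_J_iff.mp hy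
    apply mem_Dset_of_sq
    rw [dist_xvec_ind hA]
    by_cases h : i ∈ A <;> simp [h]
  · obtain ⟨i, rfl⟩ := mem_X_iff.mp hx
    obtain ⟨j, rfl⟩ := mem_X_iff.mp hy
    have hij : i ≠ j := fun h => hne (by rw [h])
    apply mem_Dset_of_sq
    rw [dist_xvec_xvec hij]
    norm_num

lemma JX_subset_Hyp : (JohnsonRep 8 3 ∪ X83) ⊆ Hyp 8 3 := by
  rintro x (hx | hx)
  · obtain ⟨A, hA, rfl⟩ := mem_J_iff.mp hx
    show ∑ i, ind A i = ((3:ℕ) : ℝ)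
    rw [sum_ind, hA]
  · obtain ⟨i, rfl⟩ := mem_X_iff.mp hx
    show ∑ j, xvec i j = ((3:ℕ) : ℝ)
    rw [sum_xvec]; norm_num

lemma JX_ncard : (JohnsonRep 8 3 ∪ X83).ncard = 64 := by
  classical
  have hset : JohnsonRep 8 3 ∪ X83 =
      ↑(((univ.powersetCard 3).image ind ∪ univ.image xvec : Finset (EuclideanSpace ℝ (Fin 8)))) := by
    ext z
    simp only [Set.mem_union, Finset.coe_union, Finset.coe_image, Set.mem_union, Set.mem_image,
      Finset.mem_coe, Finset.mem_powersetCard_univ, mem_J_iff, mem_X_iff, Finset.mem_univ]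
    constructor
    · rintro (⟨A, hA, rfl⟩ | ⟨i, rfl⟩)
      · exact Or.inl ⟨A, hA, rfl⟩
      · exact Or.inr ⟨i, by simp⟩
    · rintro (⟨A, hA, rfl⟩ | ⟨i, _, rfl⟩)
      · exact Or.inl ⟨A, hA, rfl⟩
      · exact Or.inr ⟨i, rfl⟩
  rw [hset, Set.ncard_coe_finset]
  rw [Finset.card_union_of_disjoint]
  · rw [Finset.card_image_of_injOn, Finset.card_image_of_injective]
    · rw [Finset.card_powersetCard, Finset.card_univ]
      decide
    · intro i j hij
      by_contra hne
      have := congrArg (fun v => v i) hij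
      simp [xvec, hne] at this
      norm_num at this
    · intro A hA B hB hAB
      by_contra hne
      exact ind_ne_ind hne hAB
  · rw [Finset.disjoint_left]
    rintro z hz hz'
    obtain ⟨A, _, rfl⟩ := Finset.mem_image.mp hz
    obtain ⟨i, _, hi⟩ := Finset.mem_image.mp hz'
    have := congrArg (fun v => v i) hi
    by_cases h : i ∈ A <;> simp [xvec, ind, h] at this <;> norm_num at this

lemma JX_isSDS : IsSDistanceSet 3 (JohnsonRep 8 3 ∪ X83) := by
  have heq : distSet (JohnsonRep 8 3 ∪ X83) = Dset :=
    Set.Subset.antisymm distSet_JX_subset (Dset_subset_distSet Set.subset_union_left)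
  exact ⟨heq ▸ Dset_finite, heq ▸ Dset_ncard⟩

lemma extension_mem {y : EuclideanSpace ℝ (Fin 8)} (hy : y ∈ Hyp 8 3)
    (h : IsSDistanceSet 3 (JohnsonRep 8 3 ∪ {y})) : y ∈ JohnsonRep 8 3 ∪ X83 := by
  classical
  by_contra hyn
  have hyJ : y ∉ JohnsonRep 8 3 := fun h' => hyn (Or.inl h')
  have hyX : y ∉ X83 := fun h' => hyn (Or.inr h')
  have hDeq : distSet (JohnsonRep 8 3 ∪ {y}) = Dset := by
    refine (Set.eq_of_subset_of_ncard_le (Dset_subset_distSet Set.subset_union_left) ?_ h.1).symm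
    rw [h.2, Dset_ncard]
  have key : ∀ A : Finset (Fin 8), A.card = 3 →
      (∑ i, y i ^ 2) - 2 * (∑ i ∈ A, y i) + 3 = 2 ∨
      (∑ i, y i ^ 2) - 2 * (∑ i ∈ A, y i) + 3 = 4 ∨
      (∑ i, y i ^ 2) - 2 * (∑ i ∈ A, y i) + 3 = 6 := by
    intro A hA3
    have hne : ind A ≠ y := fun h' => hyJ (h' ▸ ind_mem_J hA3)
    have hmem : dist y (ind A) ∈ Dset := by
      rw [← hDeq]
      exact ⟨y, Or.inr rfl, ind A, Or.inl (ind_mem_J hA3), fun h' => hne h'.symm, rfl⟩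
    have hds := dist_sq_ind y hA3
    rcases hmem with h' | h' | h'
    · left; rw [← hds, h']; exact Real.sq_sqrt (by norm_num)
    · right; left; rw [← hds, h']; norm_num
    · right; right; rw [← hds, h']; exact Real.sq_sqrt (by norm_num)
  -- Step A : pairwise differences
  have pair : ∀ i j : Fin 8, i ≠ j → y i - y j = -2 ∨ y i - y j = -1 ∨ y i - y j = 0 ∨
      y i - y j = 1 ∨ y i - y j = 2 := by
    intro i j hij
    have hcc : 2 ≤ (({i,j}ᶜ : Finset (Fin 8))).card := by
      rw [Finset.card_compl]
      have h2 : ({i,j} : Finset (Fin 8)).card = 2 := by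
        rw [Finset.card_insert_of_notMem (by simp [hij]), Finset.card_singleton]
      rw [h2]; simp
    obtain ⟨B, hBsub, hB2⟩ := Finset.exists_subset_card_eq hcc
    have hiB : i ∉ B := fun hm => by
      have := hBsub hm; rw [Finset.mem_compl] at this; simp at this
    have hjB : j ∉ B := fun hm => by
      have := hBsub hm; rw [Finset.mem_compl] at this; simp at this
    have cA : (insert i B).card = 3 := by rw [Finset.card_insert_of_notMem hiB, hB2]
    have cA' : (insert j B).card = 3 := by rw [Finset.card_insert_of_notMem hjB, hB2]
    have e1 := key _ cA
    have e2 := key _ cA'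
    rw [Finset.sum_insert hiB] at e1
    rw [Finset.sum_insert hjB] at e2
    rcases e1 with e1 | e1 | e1 <;> rcases e2 with e2 | e2 | e2 <;>
      first
      | (left; linarith)
      | (right; left; linarith)
      | (right; right; left; linarith)
      | (right; right; right; left; linarith)
      | (right; right; right; right; linarith)
  -- Step B : minimum and trichotomy
  obtain ⟨i0, -, hmin⟩ := Finset.exists_min_image univ y ⟨0, Finset.mem_univ 0⟩
  set v := y i0 with hvdef
  have tri : ∀ i, y i = v ∨ y i = v + 1 ∨ y i = v + 2 := by
    intro i
    by_cases hii : i = i0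
    · left; rw [hii]
    · have hp := pair i i0 hii
      have hm := hmin i (Finset.mem_univ i)
      rcases hp with h' | h' | h' | h' | h' <;> [linarith; linarith; (left; linarith);
        (right; left; linarith); (right; right; linarith)]
  -- Step C : partition by value
  set A0 := univ.filter (fun i => y i = v) with hA0def
  set B1 := univ.filter (fun i => y i = v + 1) with hB1def
  set B2 := univ.filter (fun i => y i = v + 2) with hB2def
  have hd01 : Disjoint A0 B1 := by
    rw [Finset.disjoint_left]
    intro i h1 h2
    rw [hA0def, Finset.mem_filter] at h1
    rw [hB1def, Finset.mem_filter] at h2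
    linarith [h1.2, h2.2]
  have hd02 : Disjoint A0 B2 := by
    rw [Finset.disjoint_left]
    intro i h1 h2
    rw [hA0def, Finset.mem_filter] at h1
    rw [hB2def, Finset.mem_filter] at h2
    linarith [h1.2, h2.2]
  have hd12 : Disjoint B1 B2 := by
    rw [Finset.disjoint_left]
    intro i h1 h2
    rw [hB1def, Finset.mem_filter] at h1
    rw [hB2def, Finset.mem_filter] at h2
    linarith [h1.2, h2.2]
  have hd012 : Disjoint (A0 ∪ B1) B2 := Finset.disjoint_union_left.mpr ⟨hd02, hd12⟩
  have hcover : (univ : Finset (Fin 8)) = A0 ∪ B1 ∪ B2 := by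
    ext i
    simp only [Finset.mem_univ, true_iff, Finset.mem_union, hA0def, hB1def, hB2def,
      Finset.mem_filter, Finset.mem_univ, true_and]
    rcases tri i with h' | h' | h' <;> tauto
  set a := A0.card with hadef
  set b := B1.card with hbdef
  set c := B2.card with hcdef
  have habc : a + b + c = 8 := by
    have : (univ : Finset (Fin 8)).card = 8 := by simp
    rw [hcover, Finset.card_union_of_disjoint hd012, Finset.card_union_of_disjoint hd01] at this
    omega
  have ha1 : 1 ≤ a := by
    rw [hadef]
    refine Finset.card_pos.mpr ⟨i0, ?_⟩
    rw [hA0def, Finset.mem_filter]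
    exact ⟨Finset.mem_univ _, rfl⟩
  -- sums over the partition
  have sumA0 : ∑ i ∈ A0, y i = (a : ℝ) * v := by
    rw [Finset.sum_congr rfl (fun i hi => (Finset.mem_filter.mp (hi)).2),
      Finset.sum_const, nsmul_eq_mul]
  have sumB1 : ∑ i ∈ B1, y i = (b : ℝ) * (v + 1) := by
    rw [Finset.sum_congr rfl (fun i hi => (Finset.mem_filter.mp (hi)).2),
      Finset.sum_const, nsmul_eq_mul]
  have sumB2 : ∑ i ∈ B2, y i = (c : ℝ) * (v + 2) := by
    rw [Finset.sum_congr rfl (fun i hi => (Finset.mem_filter.mp (hi)).2),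
      Finset.sum_const, nsmul_eq_mul]
  have hsum : (a : ℝ) * v + (b : ℝ) * (v + 1) + (c : ℝ) * (v + 2) = 3 := by
    have h3 : ∑ i, y i = 3 := by
      have := hy; simp only [Hyp, Set.mem_setOf_eq] at this; rw [this]; norm_num
    rw [hcover, Finset.sum_union hd012, Finset.sum_union hd01, sumA0, sumB1, sumB2] at h3
    linarith
  have hq : (∑ i, y i ^ 2) = (a : ℝ) * v^2 + (b : ℝ) * (v+1)^2 + (c : ℝ) * (v+2)^2 := by
    have e0 : ∑ i ∈ A0, y i ^ 2 = ∑ _i ∈ A0, v ^ 2 :=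
      Finset.sum_congr rfl (fun i hi => by rw [(Finset.mem_filter.mp (hi)).2])
    have e1 : ∑ i ∈ B1, y i ^ 2 = ∑ _i ∈ B1, (v + 1) ^ 2 :=
      Finset.sum_congr rfl (fun i hi => by rw [(Finset.mem_filter.mp (hi)).2])
    have e2 : ∑ i ∈ B2, y i ^ 2 = ∑ _i ∈ B2, (v + 2) ^ 2 :=
      Finset.sum_congr rfl (fun i hi => by rw [(Finset.mem_filter.mp (hi)).2])
    rw [hcover, Finset.sum_union hd012, Finset.sum_union hd01, e0, e1, e2,
      Finset.sum_const, Finset.sum_const, Finset.sum_const, nsmul_eq_mul, nsmul_eq_mul,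
      nsmul_eq_mul, ← hadef, ← hbdef, ← hcdef]
  have h8' : (a:ℝ) + b + c = 8 := by exact_mod_cast habc
  have hca : (a:ℝ) = 8 - (b:ℝ) - (c:ℝ) := by linarith
  have hv8 : 8 * v = 3 - (b:ℝ) - 2*(c:ℝ) := by linear_combination hsum - v * hca
  have hv : v = (3 - (b:ℝ) - 2*(c:ℝ))/8 := by linarith
  have choose3 : ∀ n0 n1 n2 : ℕ, n0 + n1 + n2 = 3 → n0 ≤ a → n1 ≤ b → n2 ≤ c →
      ∃ A : Finset (Fin 8), A.card = 3 ∧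
        ∑ i ∈ A, y i = (n0 : ℝ) * v + (n1 : ℝ) * (v+1) + (n2 : ℝ) * (v+2) := by
    intro n0 n1 n2 h3 h0 h1 h2
    obtain ⟨t0, ht0, hc0⟩ := Finset.exists_subset_card_eq h0
    obtain ⟨t1, ht1, hc1⟩ := Finset.exists_subset_card_eq h1
    obtain ⟨t2, ht2, hc2⟩ := Finset.exists_subset_card_eq h2
    have d01 : Disjoint t0 t1 := hd01.mono ht0 ht1
    have d02 : Disjoint t0 t2 := hd02.mono ht0 ht2
    have d12 : Disjoint t1 t2 := hd12.mono ht1 ht2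
    have d012 : Disjoint (t0 ∪ t1) t2 := Finset.disjoint_union_left.mpr ⟨d02, d12⟩
    refine ⟨t0 ∪ t1 ∪ t2, ?_, ?_⟩
    · rw [Finset.card_union_of_disjoint d012, Finset.card_union_of_disjoint d01, hc0, hc1, hc2, h3]
    · have e0 : ∑ i ∈ t0, y i = ∑ _i ∈ t0, v :=
        Finset.sum_congr rfl (fun i hi => (Finset.mem_filter.mp (ht0 hi)).2)
      have e1 : ∑ i ∈ t1, y i = ∑ _i ∈ t1, (v+1) :=
        Finset.sum_congr rfl (fun i hi => (Finset.mem_filter.mp (ht1 hi)).2)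
      have e2 : ∑ i ∈ t2, y i = ∑ _i ∈ t2, (v+2) :=
        Finset.sum_congr rfl (fun i hi => (Finset.mem_filter.mp (ht2 hi)).2)
      rw [Finset.sum_union d012, Finset.sum_union d01, e0, e1, e2,
        Finset.sum_const, Finset.sum_const, Finset.sum_const, nsmul_eq_mul, nsmul_eq_mul,
        nsmul_eq_mul, hc0, hc1, hc2]
  -- good shapes
  by_cases hg1 : b = 3 ∧ c = 0
  · obtain ⟨hb3, hc0⟩ := hg1
    have hv0 : v = 0 := by rw [hv, hb3, hc0]; norm_num
    have hB2e : B2 = ∅ := Finset.card_eq_zero.mp (by omega)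
    apply hyJ
    refine ⟨?_, ?_⟩
    · intro i
      rcases tri i with h' | h' | h'
      · left; rw [h', hv0]
      · right; rw [h', hv0]; norm_num
      · exfalso
        have hiB2 : i ∈ B2 := by rw [hB2def, Finset.mem_filter]; exact ⟨Finset.mem_univ _, h'⟩
        rw [hB2e] at hiB2
        exact absurd hiB2 (Finset.notMem_empty i)
    · have hset1 : {i : Fin 8 | y i = 1} = ↑B1 := by
        ext i
        rw [hB1def]
        simp only [Set.mem_setOf_eq, Finset.coe_filter, Finset.mem_univ, true_and]
        rw [hv0]; norm_num
      rw [hset1, Set.ncard_coe_finset, ← hbdef, hb3]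
  by_cases hg2 : b = 7 ∧ c = 0
  · obtain ⟨hb7, hc0⟩ := hg2
    have hv0 : v = -1/2 := by rw [hv, hb7, hc0]; norm_num
    apply hyX
    constructor
    · have hset1 : {i : Fin 8 | y i = 1/2} = ↑B1 := by
        ext i
        rw [hB1def]
        simp only [Set.mem_setOf_eq, Finset.coe_filter, Finset.mem_univ, true_and]
        rw [hv0]; norm_num
      rw [hset1, Set.ncard_coe_finset, ← hbdef, hb7]
    · have hset0 : {i : Fin 8 | y i = -1/2} = ↑A0 := by
        ext i
        rw [hA0def]
        simp only [Set.mem_setOf_eq, Finset.coe_filter, Finset.mem_univ, true_and]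
        rw [hv0]
      rw [hset0, Set.ncard_coe_finset, ← hadef]
      omega
  -- contradiction branches
  rcases Nat.lt_or_ge a 3 with ha3 | ha3
  · -- a = 1 or a = 2
    have ha12 : a = 1 ∨ a = 2 := by omega
    rcases ha12 with ha | ha
    · -- a = 1
      rcases Nat.lt_or_ge b 2 with hb2 | hb2
      · rcases Nat.lt_or_ge b 1 with hb1 | hb1
        · -- b = 0, c = 7
          obtain ⟨A, cA, hsA⟩ := choose3 1 0 2 (by norm_num) (by omega) (by omega) (by omega)
          have hE := key A cA
          rw [hsA, hq, hca, hv] at hE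
          have hb0 : b = 0 := by omega
          have hc7 : c = 7 := by omega
          rw [hb0, hc7] at hE
          norm_num at hE
        · -- b = 1, c = 6
          obtain ⟨A, cA, hsA⟩ := choose3 1 1 1 (by norm_num) (by omega) (by omega) (by omega)
          have hE := key A cA
          rw [hsA, hq, hca, hv] at hE
          have hb1' : b = 1 := by omega
          have hc6 : c = 6 := by omega
          rw [hb1', hc6] at hE
          norm_num at hE
      · -- a = 1, b ≥ 2
        obtain ⟨A, cA, hsA⟩ := choose3 1 2 0 (by norm_num) (by omega) (by omega) (by omega)
        have hE := key A cA
        rw [hsA, hq, hca, hv] at hE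
        have hbl : 2 ≤ b := hb2
        have hbu : b ≤ 7 := by omega
        have hcu : c ≤ 5 := by omega
        interval_cases b <;> interval_cases c <;> first | omega | norm_num at hE
    · -- a = 2
      rcases Nat.lt_or_ge b 1 with hb1 | hb1
      · -- b = 0, c = 6
        obtain ⟨A, cA, hsA⟩ := choose3 2 0 1 (by norm_num) (by omega) (by omega) (by omega)
        have hE := key A cA
        rw [hsA, hq, hca, hv] at hE
        have hb0 : b = 0 := by omega
        have hc6 : c = 6 := by omega
        rw [hb0, hc6] at hE
        norm_num at hE
      · -- a = 2, b ≥ 1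
        obtain ⟨A, cA, hsA⟩ := choose3 2 1 0 (by norm_num) (by omega) (by omega) (by omega)
        have hE := key A cA
        rw [hsA, hq, hca, hv] at hE
        have hbu : b ≤ 6 := by omega
        have hcu : c ≤ 5 := by omega
        interval_cases b <;> interval_cases c <;> first | omega | norm_num at hE
  · -- a ≥ 3
    obtain ⟨A, cA, hsA⟩ := choose3 3 0 0 (by norm_num) (by omega) (by omega) (by omega)
    have hE := key A cA
    rw [hsA, hq, hca, hv] at hE
    have hbu : b ≤ 5 := by omega
    have hcu : c ≤ 5 := by omega
    interval_cases b <;> interval_cases c <;>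
      first
        | omega
        | norm_num at hE

theorem maximal_three_distance_J83 :
    (JohnsonRep 8 3 ∪ X83) ⊆ Hyp 8 3 ∧
    (JohnsonRep 8 3 ∪ X83).ncard = 64 ∧
    IsSDistanceSet 3 (JohnsonRep 8 3 ∪ X83) ∧
    (∀ y ∈ Hyp 8 3, IsSDistanceSet 3 (JohnsonRep 8 3 ∪ {y}) →
      y ∈ JohnsonRep 8 3 ∪ X83) ∧
    (∀ T : Set (EuclideanSpace ℝ (Fin 8)), JohnsonRep 8 3 ⊆ T → T ⊆ Hyp 8 3 →
      IsSDistanceSet 3 T →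
      (¬∃ y ∈ Hyp 8 3 \ T, IsSDistanceSet 3 (T ∪ {y})) →
      T = JohnsonRep 8 3 ∪ X83) := by
  refine ⟨JX_subset_Hyp, JX_ncard, JX_isSDS, fun y hy h => extension_mem hy h, ?_⟩
  intro T hJT hTH hT hmax
  have hTsub : T ⊆ JohnsonRep 8 3 ∪ X83 := by
    intro z hz
    apply extension_mem (hTH hz)
    have hsub : JohnsonRep 8 3 ∪ {z} ⊆ T := by
      rintro w (hw | hw)
      · exact hJT hw
      · exact (Set.mem_singleton_iff.mp hw) ▸ hz
    have hfin : (distSet (JohnsonRep 8 3 ∪ {z})).Finite := hT.1.subset (distSet_mono hsub)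
    refine ⟨hfin, ?_⟩
    have hle := Set.ncard_le_ncard (distSet_mono hsub) hT.1
    rw [hT.2] at hle
    have hge := Set.ncard_le_ncard (Dset_subset_distSet
      (Set.subset_union_left : JohnsonRep 8 3 ⊆ JohnsonRep 8 3 ∪ {z})) hfin
    rw [Dset_ncard] at hge
    omega
  have hsup : JohnsonRep 8 3 ∪ X83 ⊆ T := by
    intro x hx
    by_contra hxT
    apply hmax
    refine ⟨x, ⟨JX_subset_Hyp hx, hxT⟩, ?_⟩
    have hsub2 : T ∪ {x} ⊆ JohnsonRep 8 3 ∪ X83 := by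
      rintro w (hw | hw)
      · exact hTsub hw
      · exact (Set.mem_singleton_iff.mp hw) ▸ hx
    have hfin2 : (distSet (T ∪ {x})).Finite :=
      Dset_finite.subset ((distSet_mono hsub2).trans distSet_JX_subset)
    refine ⟨hfin2, ?_⟩
    have hle := Set.ncard_le_ncard ((distSet_mono hsub2).trans distSet_JX_subset) Dset_finite
    rw [Dset_ncard] at hle
    have hJTx : JohnsonRep 8 3 ⊆ T ∪ {x} := hJT.trans Set.subset_union_left
    have hge := Set.ncard_le_ncard (Dset_subset_distSet hJTx) hfin2
    rw [Dset_ncard] at hge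
    omega
  exact Set.Subset.antisymm hTsub hsup
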